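/- If the exponent v of a finite abelian group G does not divide k-l, then λ_{k,l}(G) ≥ n/(2(k+l)) > 0, where n = |G|. Conversely, if v divides k-l, then λ_{k,l}(G) = 0. -/

import Mathlib

open Finset Pointwise

/-- The h-fold sumset of a finset. -/
def foldSum {G : Type*} [AddCommGroup G] [DecidableEq G] (A : Finset G) : ℕ → Finset G
  | 0 => {0}
  | n + 1 => A + foldSum A n

lemma nsmul_mem_foldSum {G : Type*} [AddCommGroup G] [DecidableEq G] {A : Finset G}
    {a : G} (ha : a ∈ A) (n : ℕ) : n • a ∈ foldSum A n := by
  induction n with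
  | zero => simp [foldSum]
  | succ n ih =>
    rw [foldSum, succ_nsmul']
    exact Finset.add_mem_add ha ih

lemma foldSum_mono {G : Type*} [AddCommGroup G] [DecidableEq G] {A B : Finset G}
    (h : A ⊆ B) (n : ℕ) : foldSum A n ⊆ foldSum B n := by
  induction n with
  | zero => simp [foldSum]
  | succ n ih => exact Finset.add_subset_add h ih

lemma map_mem_foldSum {G H : Type*} [AddCommGroup G] [DecidableEq G]
    [AddCommGroup H] [DecidableEq H] (φ : G →+ H) {A : Finset G} {x : G} (n : ℕ)
    (hx : x ∈ foldSum A n) : φ x ∈ foldSum (A.image φ) n := by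
  induction n generalizing x with
  | zero => simp only [foldSum, Finset.mem_singleton] at hx ⊢; simp [hx]
  | succ n ih =>
    rw [foldSum, Finset.mem_add] at hx
    obtain ⟨b, hb, y, hy, rfl⟩ := hx
    rw [foldSum, map_add]
    exact Finset.add_mem_add (Finset.mem_image_of_mem _ hb) (ih hy)

lemma mem_foldSum_interval {m t : ℕ} (a : ZMod m) (n : ℕ) {x : ZMod m}
    (hx : x ∈ foldSum ((Finset.range t).image (fun i : ℕ => a + (i : ZMod m))) n) :
    ∃ s : ℕ, s ≤ n * (t - 1) ∧ x = n • a + (s : ZMod m) := by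
  induction n generalizing x with
  | zero =>
    simp only [foldSum, Finset.mem_singleton] at hx
    exact ⟨0, by simp, by simp [hx]⟩
  | succ n ih =>
    rw [foldSum, Finset.mem_add] at hx
    obtain ⟨b, hb, y, hy, rfl⟩ := hx
    obtain ⟨s, hs, rfl⟩ := ih hy
    simp only [Finset.mem_image, Finset.mem_range] at hb
    obtain ⟨i, hi, rfl⟩ := hb
    refine ⟨i + s, ?_, ?_⟩
    · have : i ≤ t - 1 := by omega
      calc i + s ≤ (t - 1) + n * (t - 1) := by omega
      _ = (n + 1) * (t - 1) := by ring
    · rw [succ_nsmul]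
      push_cast
      abel

/-- The key construction in `ZMod m`. -/
lemma zmod_construction (m k l : ℕ) (hm : 1 < m) (hl : 1 ≤ l) (hkl : l < k)
    (hNd : ¬ (m ∣ (k - l))) :
    ∃ B : Finset (ZMod m), Disjoint (foldSum B k) (foldSum B l) ∧
      m ≤ B.card * (2 * (k + l)) ∧ 1 ≤ B.card := by
  haveI : NeZero m := ⟨by omega⟩
  set N := k - l with hN
  have hN0 : 0 < N := by omega
  set g := Nat.gcd N m with hg
  have hg0 : 0 < g := Nat.gcd_pos_of_pos_left _ hN0
  have hgm : g ∣ m := Nat.gcd_dvd_right _ _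
  have hglt : g < m := by
    rcases lt_or_eq_of_le (Nat.le_of_dvd (by omega) hgm) with h | h
    · exact h
    · exact absurd (h ▸ Nat.gcd_dvd_left N m) hNd
  have hg2 : 2 * g ≤ m := by
    obtain ⟨c, hc⟩ := hgm
    have : 2 ≤ c := by
      rcases Nat.lt_or_ge c 2 with h | h
      · interval_cases c <;> omega
      · exact h
    calc 2 * g ≤ g * c := by nlinarith
    _ = m := hc.symm
  set c' := 2 * (k + l) with hc'
  set τ := (m - 1) / c' with hτdef
  set t := τ + 1 with ht
  -- bound on τ
  have hτb : l * τ + k * τ ≤ (m - 1) / 2 := by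
    have h1 : τ = (m - 1) / 2 / (k + l) := by
      rw [hτdef, hc', Nat.div_div_eq_div_mul]
    have h2 : (k + l) * τ ≤ (m - 1) / 2 := by
      rw [h1, mul_comm]
      exact Nat.div_mul_le_self _ _
    nlinarith [h2]
  have hhalf : (m - 1) / 2 + g ≤ m - 1 := by omega
  -- choose D
  obtain ⟨q, r, hqr, hr⟩ : ∃ q r, l * τ = g * q + r ∧ r < g :=
    ⟨(l * τ) / g, (l * τ) % g, (Nat.div_add_mod _ _).symm, Nat.mod_lt _ hg0⟩
  set D := g * q + g with hD
  have hD1 : l * τ < D := by omega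
  have hD2 : D + k * τ ≤ m - 1 := by omega
  -- choose a with N • a = D
  set u := Nat.gcdA N m with hu
  set a : ZMod m := ((u * (q + 1) : ℤ) : ZMod m) with ha
  have hNa : N • a = (D : ZMod m) := by
    have key : (N : ℤ) * u = (g : ℤ) - m * Nat.gcdB N m := by
      have := Nat.gcd_eq_gcd_ab N m
      rw [← hg] at this
      linarith
    have hm0 : ((m : ℤ) : ZMod m) = 0 := by
      exact_mod_cast ZMod.natCast_self m
    rw [ha, nsmul_eq_mul]
    have : ((N : ℤ) * (u * (q + 1)) : ℤ) = (g * (q + 1) : ℤ) - m * (Nat.gcdB N m * (q + 1)) := by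
      rw [← mul_assoc, key]; ring
    calc (N : ZMod m) * ((u * (q + 1) : ℤ) : ZMod m)
        = (((N : ℤ) * (u * (q + 1)) : ℤ) : ZMod m) := by push_cast; ring
      _ = (((g * (q + 1) : ℤ) - m * (Nat.gcdB N m * (q + 1)) : ℤ) : ZMod m) := by rw [this]
      _ = (D : ZMod m) := by push_cast [hm0]; rw [hD]; push_cast; ring
  -- the set B
  set B : Finset (ZMod m) := (Finset.range t).image (fun i : ℕ => a + (i : ZMod m)) with hB
  have htm : t ≤ m := by
    have : τ ≤ m - 1 := Nat.div_le_self _ _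
    omega
  have hcard : B.card = t := by
    rw [hB, Finset.card_image_of_injOn, Finset.card_range]
    intro i hi j hj hij
    simp only [Finset.mem_coe, Finset.mem_range] at hi hj
    have : (i : ZMod m) = (j : ZMod m) := by
      have := add_left_cancel hij
      exact this
    have hvi := ZMod.val_cast_of_lt (show i < m by omega)
    have hvj := ZMod.val_cast_of_lt (show j < m by omega)
    rw [← hvi, ← hvj, this]
  refine ⟨B, ?_, ?_, ?_⟩
  · rw [Finset.disjoint_left]
    intro x hxk hxl
    obtain ⟨s₁, hs₁, hx1⟩ := mem_foldSum_interval a k hxk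
    obtain ⟨s₂, hs₂, hx2⟩ := mem_foldSum_interval a l hxl
    have hks : k • a = l • a + (D : ZMod m) := by
      have : k = l + N := by omega
      rw [this, add_nsmul, hNa]
    rw [hx2, hks] at hx1
    have ht1 : t - 1 = τ := rfl
    rw [ht1] at hs₁ hs₂
    have : ((D + s₁ : ℕ) : ZMod m) = ((s₂ : ℕ) : ZMod m) := by
      rw [add_assoc] at hx1
      have h2 := add_left_cancel hx1
      push_cast
      exact h2.symm
    have hv1 := ZMod.val_cast_of_lt (show D + s₁ < m by omega)
    have hv2 := ZMod.val_cast_of_lt (show s₂ < m by omega)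
    have : D + s₁ = s₂ := by rw [← hv1, ← hv2, this]
    omega
  · rw [hcard]
    have hdm : m ≤ τ * c' + c' := by
      have h1 := Nat.div_add_mod (m - 1) c'
      have h2 := Nat.mod_lt (m - 1) (show 0 < c' by omega)
      rw [← hτdef] at h1
      rw [mul_comm]
      have h4 : m - 1 + 1 = m := by omega
      linarith [h1, h2, h4]
    calc m ≤ τ * c' + c' := hdm
    _ = t * (2 * (k + l)) := by rw [ht, hc']; ring
  · rw [hcard, ht]; exact Nat.succ_le_succ (Nat.zero_le _)

/-- If the exponent v of G does not divide k-l then λ_{k,l}(G) ≥ n/(2(k+l)) > 0;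
if v divides k-l then λ_{k,l}(G) = 0. -/
theorem stmt7 {G : Type*} [AddCommGroup G] [Fintype G] [DecidableEq G]
    (k l : ℕ) (hl : 1 ≤ l) (hkl : l < k) (hn : 1 < Fintype.card G) :
    (¬ AddMonoid.exponent G ∣ (k - l) →
      ∃ A : Finset G, Disjoint (foldSum A k) (foldSum A l) ∧ A.Nonempty ∧
        (Fintype.card G : ℚ) / (2 * (k + l)) ≤ A.card) ∧
    (AddMonoid.exponent G ∣ (k - l) →
      ∀ A : Finset G, Disjoint (foldSum A k) (foldSum A l) → A = ∅) := by
  constructor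
  · intro hexp
    -- find x with (k-l) • x ≠ 0
    have hx : ∃ x : G, (k - l) • x ≠ 0 := by
      by_contra hc
      push_neg at hc
      exact hexp (AddMonoid.exponent_dvd_iff_forall_nsmul_eq_zero.mpr hc)
    obtain ⟨x, hx⟩ := hx
    -- structure theorem
    obtain ⟨ι, hι, nn, hnn, ⟨e⟩⟩ := AddCommGroup.equiv_directSum_zmod_of_finite' G
    classical
    have hyx : (k - l) • (e x) ≠ 0 := by
      intro h
      apply hx
      have : e ((k - l) • x) = 0 := by rw [map_nsmul, h]
      exact e.injective (by rw [this, map_zero])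
    obtain ⟨i, hi⟩ : ∃ i, (k - l) • (e x i) ≠ 0 := by
      by_contra hc
      push_neg at hc
      apply hyx
      apply DFinsupp.ext
      intro j
      exact (map_nsmul (DFinsupp.evalAddMonoidHom (β := fun j => ZMod (nn j)) j)
        (k - l) (e x)).trans (hc j)
    set m := nn i with hm
    haveI : NeZero m := ⟨by have := hnn i; omega⟩
    -- surjective hom φ : G →+ ZMod m
    set φ : G →+ ZMod m :=
      (DFinsupp.evalAddMonoidHom i).comp e.toAddMonoidHom with hφ
    have hφsurj : Function.Surjective φ := by
      intro z
      refine ⟨e.symm (DirectSum.of (fun j => ZMod (nn j)) i z), ?_⟩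
      show (DFinsupp.evalAddMonoidHom i) (e (e.symm (DirectSum.of (fun j => ZMod (nn j)) i z))) = z
      rw [AddEquiv.apply_symm_apply]
      exact DirectSum.of_eq_same (β := fun j => ZMod (nn j)) i z
    have hmd : ¬ (m ∣ (k - l)) := by
      intro hd
      apply hi
      have : ((k - l : ℕ) : ZMod m) = 0 := by
        exact_mod_cast (ZMod.natCast_eq_zero_iff _ _).mpr hd
      rw [nsmul_eq_mul, this, zero_mul]
    obtain ⟨B, hBdisj, hBcard, hB1⟩ := zmod_construction m k l (hnn i) hl hkl hmd
    set A : Finset G := Finset.univ.filter (fun x => φ x ∈ B) with hA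
    -- fiber counting
    set c := (Finset.univ.filter (fun x : G => φ x = 0)).card with hc
    have hfiber : ∀ z : ZMod m, (Finset.univ.filter (fun x : G => φ x = z)).card = c := by
      intro z
      obtain ⟨x₀, hx₀⟩ := hφsurj z
      rw [hc]
      apply Finset.card_bij' (fun x _ => x - x₀) (fun y _ => y + x₀)
      · intro x hx
        simp only [Finset.mem_filter, Finset.mem_univ, true_and] at hx ⊢
        rw [map_sub, hx, hx₀, sub_self]
      · intro y hy
        simp only [Finset.mem_filter, Finset.mem_univ, true_and] at hy ⊢
        rw [map_add, hy, hx₀, zero_add]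
      · intros; simp
      · intros; simp
    have hc1 : 1 ≤ c := by
      rw [hc]
      refine Finset.card_pos.mpr ⟨0, ?_⟩
      simp
    have hGcard : Fintype.card G = m * c := by
      have h1 : (Finset.univ : Finset G).card = ∑ z : ZMod m,
          (Finset.univ.filter (fun x : G => φ x = z)).card := by
        apply Finset.card_eq_sum_card_fiberwise
        intros; simp
      rw [← Finset.card_univ, h1]
      simp only [hfiber]
      rw [Finset.sum_const, Finset.card_univ, ZMod.card, smul_eq_mul]
    have hAcard : A.card = B.card * c := by
      have h1 : A.card = ∑ z ∈ B, (A.filter (fun x => φ x = z)).card := by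
        apply Finset.card_eq_sum_card_fiberwise
        intro x hx
        rw [hA] at hx
        simp only [Finset.mem_coe, Finset.mem_filter] at hx
        exact hx.2
      rw [h1]
      have h2 : ∀ z ∈ B, (A.filter (fun x => φ x = z)).card = c := by
        intro z hz
        rw [← hfiber z]
        congr 1
        rw [hA]
        ext x
        simp only [Finset.mem_filter, Finset.mem_univ, true_and]
        constructor
        · rintro ⟨_, h⟩; exact h
        · intro h; exact ⟨h ▸ hz, h⟩
      rw [Finset.sum_congr rfl h2, Finset.sum_const, smul_eq_mul]
    refine ⟨A, ?_, ?_, ?_⟩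
    · rw [Finset.disjoint_left]
      intro x hxk hxl
      have h1 : φ x ∈ foldSum B k := by
        apply foldSum_mono (show A.image φ ⊆ B by
          intro z hz
          simp only [Finset.mem_image, hA, Finset.mem_filter, Finset.mem_univ, true_and] at hz
          obtain ⟨w, hw, rfl⟩ := hz
          exact hw)
        exact map_mem_foldSum φ k hxk
      have h2 : φ x ∈ foldSum B l := by
        apply foldSum_mono (show A.image φ ⊆ B by
          intro z hz
          simp only [Finset.mem_image, hA, Finset.mem_filter, Finset.mem_univ, true_and] at hz
          obtain ⟨w, hw, rfl⟩ := hz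
          exact hw)
        exact map_mem_foldSum φ l hxl
      exact (Finset.disjoint_left.mp hBdisj h1) h2
    · refine Finset.card_pos.mp ?_
      rw [hAcard]
      exact Nat.mul_pos (by omega) (by omega)
    · have hpos : (0 : ℚ) < 2 * (k + l) := by positivity
      rw [div_le_iff₀ hpos]
      have key : Fintype.card G ≤ A.card * (2 * (k + l)) := by
        rw [hGcard, hAcard]
        calc m * c ≤ (B.card * (2 * (k + l))) * c := Nat.mul_le_mul_right c hBcard
        _ = B.card * c * (2 * (k + l)) := by ring
      exact_mod_cast key
  · intro hexp A hdisj
    by_contra hne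
    obtain ⟨a, ha⟩ := Finset.nonempty_iff_ne_empty.mpr hne
    have h1 : k • a ∈ foldSum A k := nsmul_mem_foldSum ha k
    have h2 : l • a ∈ foldSum A l := nsmul_mem_foldSum ha l
    have heq : k • a = l • a := by
      have hz : (k - l) • a = 0 :=
        AddMonoid.exponent_dvd_iff_forall_nsmul_eq_zero.mp hexp a
      have : k = l + (k - l) := by omega
      rw [this, add_nsmul, hz, add_zero]
    rw [heq] at h1
    exact (Finset.disjoint_left.mp hdisj h1) h2
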